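/- For σ, ρ ∈ S_n, the θ-twist of B(σ,ρ) is isomorphic as an H_n(0)-module to the module B̄(σ,ρ), via the map γ ↦ (−1)^{ℓ(γσ^{-1})} γ, where θ is the involutive automorphism of H_n(0) with θ(π_i) = −π̄_i = 1 − π_i. -/

import Mathlib

open scoped Classical

noncomputable section

/-- The symmetric group `S_{n+1}` (the paper's `S_n` with `n = n+1`). -/
abbrev SG (n : ℕ) := Equiv.Perm (Fin (n + 1))

/-- The simple transposition `s_{i+1}` (adjacent transposition swapping `i` and `i+1`,
0-indexed). -/
def sgen {n : ℕ} (i : Fin n) : SG n := Equiv.swap i.castSucc i.succ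

/-- Coxeter length of a permutation, i.e. its number of inversions. -/
def len {n : ℕ} (σ : SG n) : ℕ :=
  (Finset.univ.filter fun p : Fin (n + 1) × Fin (n + 1) => p.1 < p.2 ∧ σ p.2 < σ p.1).card

/-- The left weak Bruhat order on `S_{n+1}`. -/
def leL {n : ℕ} (σ ρ : SG n) : Prop := ∃ γ, ρ = γ * σ ∧ len ρ = len σ + len γ

/-- Left descent set. -/
def DesL {n : ℕ} (σ : SG n) : Set (Fin n) := {i | len (sgen i * σ) < len σ}

/-- Right descent set. -/
def DesR {n : ℕ} (σ : SG n) : Set (Fin n) := {i | len (σ * sgen i) < len σ}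

/-- The longest element `w₀` of `S_{n+1}`. -/
def w0 {n : ℕ} : SG n := ⟨Fin.rev, Fin.rev, Fin.rev_rev, Fin.rev_rev⟩

lemma len_one {n : ℕ} : len (1 : SG n) = 0 := by
  unfold len
  rw [Finset.card_eq_zero, Finset.eq_empty_iff_forall_notMem]
  rintro p hp
  rw [Finset.mem_filter] at hp
  obtain ⟨-, h1, h2⟩ := hp
  simp only [Equiv.Perm.one_apply] at h2
  exact absurd (h1.trans h2) (lt_irrefl _)

lemma leL_refl {n : ℕ} (σ : SG n) : leL σ σ :=
  ⟨1, (one_mul σ).symm, by simp [len_one]⟩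

/-- The defining relations of the 0-Hecke algebra `H_{n+1}(0)`. -/
inductive HRel (n : ℕ) : FreeAlgebra ℂ (Fin n) → FreeAlgebra ℂ (Fin n) → Prop
  | idem (i : Fin n) :
      HRel n (FreeAlgebra.ι ℂ i * FreeAlgebra.ι ℂ i) (FreeAlgebra.ι ℂ i)
  | braid (i j : Fin n) (h : (i : ℕ) + 1 = j) :
      HRel n (FreeAlgebra.ι ℂ i * FreeAlgebra.ι ℂ j * FreeAlgebra.ι ℂ i)
             (FreeAlgebra.ι ℂ j * FreeAlgebra.ι ℂ i * FreeAlgebra.ι ℂ j)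
  | comm (i j : Fin n) (h : (i : ℕ) + 2 ≤ j) :
      HRel n (FreeAlgebra.ι ℂ i * FreeAlgebra.ι ℂ j) (FreeAlgebra.ι ℂ j * FreeAlgebra.ι ℂ i)

/-- The 0-Hecke algebra `H_{n+1}(0)` over `ℂ`. -/
abbrev Hecke (n : ℕ) := RingQuot (HRel n)

/-- The generator `π_{i+1}` of the 0-Hecke algebra. -/
def hpi {n : ℕ} (i : Fin n) : Hecke n :=
  RingQuot.mkAlgHom ℂ (HRel n) (FreeAlgebra.ι ℂ i)

/-- The element `π̄_{i+1} = π_{i+1} - 1`. -/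
def hpibar {n : ℕ} (i : Fin n) : Hecke n := hpi i - 1

/-- `l` is a reduced word for `σ`. -/
def IsReducedWord {n : ℕ} (l : List (Fin n)) (σ : SG n) : Prop :=
  (l.map sgen).prod = σ ∧ l.length = len σ

/-- `π_σ`, the product of the generators `π_i` along a reduced word for `σ`. -/
noncomputable def piPerm {n : ℕ} (σ : SG n) : Hecke n :=
  if h : ∃ l : List (Fin n), IsReducedWord l σ then ((h.choose.map hpi).prod) else 0

/-- `π̄_σ`, the product of the elements `π̄_i` along a reduced word for `σ`. -/
noncomputable def pibarPerm {n : ℕ} (σ : SG n) : Hecke n :=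
  if h : ∃ l : List (Fin n), IsReducedWord l σ then ((h.choose.map hpibar).prod) else 0

/-- The left weak Bruhat interval `[σ,ρ]_L`. -/
abbrev Itv {n : ℕ} (σ ρ : SG n) := {γ : SG n // leL σ γ ∧ leL γ ρ}

/-- The action of the generator `π_{i+1}` on a basis element of `ℂ[σ,ρ]_L`. -/
noncomputable def bpiFun {n : ℕ} (σ ρ : SG n) (i : Fin n) (γ : Itv σ ρ) :
    Itv σ ρ →₀ ℂ :=
  if i ∈ DesL γ.1 then Finsupp.single γ 1
  else if h : leL σ (sgen i * γ.1) ∧ leL (sgen i * γ.1) ρ then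
    Finsupp.single ⟨sgen i * γ.1, h⟩ 1
  else 0

/-- The operator `𝛑_i` on `ℂ[σ,ρ]_L` (the action of `π_{i+1}` on `B(σ,ρ)`). -/
noncomputable def bpi {n : ℕ} (σ ρ : SG n) (i : Fin n) :
    (Itv σ ρ →₀ ℂ) →ₗ[ℂ] (Itv σ ρ →₀ ℂ) :=
  Finsupp.lift _ ℂ _ (bpiFun σ ρ i)

/-- The action of `π̄_{i+1}` on a basis element of the module `B̄(σ,ρ)`. -/
noncomputable def bbarFun {n : ℕ} (σ ρ : SG n) (i : Fin n) (γ : Itv σ ρ) :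
    Itv σ ρ →₀ ℂ :=
  if i ∈ DesL γ.1 then -Finsupp.single γ 1
  else if h : leL σ (sgen i * γ.1) ∧ leL (sgen i * γ.1) ρ then
    Finsupp.single ⟨sgen i * γ.1, h⟩ 1
  else 0

/-- The operator giving the action of `π̄_{i+1}` on `B̄(σ,ρ)`. -/
noncomputable def bbar {n : ℕ} (σ ρ : SG n) (i : Fin n) :
    (Itv σ ρ →₀ ℂ) →ₗ[ℂ] (Itv σ ρ →₀ ℂ) :=
  Finsupp.lift _ ℂ _ (bbarFun σ ρ i)

/-- The underlying map of the `θ`-twist isomorphism, sending a basis element `γ` of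
`B(σ,ρ)` to `(-1)^{ℓ(γσ⁻¹)} γ`. -/
noncomputable def thetaF {n : ℕ} (σ ρ : SG n) :
    (Itv σ ρ →₀ ℂ) →ₗ[ℂ] (Itv σ ρ →₀ ℂ) :=
  Finsupp.lift _ ℂ _ (fun γ : Itv σ ρ =>
    ((-1 : ℂ) ^ len (γ.1 * σ⁻¹)) • Finsupp.single γ 1)

lemma lift_single {M : Type*} [AddCommMonoid M] [Module ℂ M] {α : Type*} (f : α → M)
    (a : α) (b : ℂ) : (Finsupp.lift M ℂ α f) (Finsupp.single a b) = b • f a := by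
  simp [Finsupp.lift_apply, Finsupp.sum_single_index]

lemma signAux_eq_len {n : ℕ} (f : SG n) :
    Equiv.Perm.signAux f = (-1) ^ (len f) := by
  unfold Equiv.Perm.signAux len
  rw [Finset.prod_ite, Finset.prod_const, Finset.prod_const, one_pow, mul_one]
  congr 1
  apply Finset.card_bij (fun (x : Σ _ : Fin (n+1), Fin (n+1)) _ => ((x.2, x.1) : Fin (n+1) × Fin (n+1)))
  · rintro ⟨a, b⟩ ha
    simp only [Finset.mem_filter, Equiv.Perm.mem_finPairsLT] at ha ⊢
    refine ⟨Finset.mem_univ _, ha.1, ?_⟩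
    exact lt_of_le_of_ne ha.2 fun he => absurd (f.injective he) (ne_of_gt ha.1)
  · rintro ⟨a, b⟩ ha ⟨c, d⟩ hc h
    simp only [Prod.mk.injEq] at h
    obtain ⟨h1, h2⟩ := h
    subst h1; subst h2; rfl
  · rintro ⟨a, b⟩ hp
    simp only [Finset.mem_filter, Finset.mem_univ, true_and] at hp
    exact ⟨⟨b, a⟩, by
      simp only [Finset.mem_filter, Equiv.Perm.mem_finPairsLT]
      exact ⟨hp.1, le_of_lt hp.2⟩, rfl⟩

lemma neg_one_pow_len_sgen_mul {n : ℕ} (i : Fin n) (τ : SG n) :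
    (-1 : ℂ) ^ len (sgen i * τ) = -(-1 : ℂ) ^ len τ := by
  have h1 : Equiv.Perm.signAux (sgen i * τ) = -Equiv.Perm.signAux τ := by
    rw [Equiv.Perm.signAux_mul]
    have : Equiv.Perm.signAux (sgen i) = -1 :=
      Equiv.Perm.signAux_swap (Fin.castSucc_lt_succ : i.castSucc < i.succ).ne
    rw [this, neg_one_mul]
  rw [signAux_eq_len, signAux_eq_len] at h1
  have h2 := congrArg (fun u : ℤˣ => ((u : ℤ) : ℂ)) h1
  simpa using h2

lemma thetaF_single {n : ℕ} (σ ρ : SG n) (a : Itv σ ρ) (b : ℂ) :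
    thetaF σ ρ (Finsupp.single a b) =
      (b * (-1 : ℂ) ^ len (a.1 * σ⁻¹)) • Finsupp.single a 1 := by
  rw [thetaF, lift_single, smul_smul]

lemma bpi_single {n : ℕ} (σ ρ : SG n) (i : Fin n) (a : Itv σ ρ) (b : ℂ) :
    bpi σ ρ i (Finsupp.single a b) = b • bpiFun σ ρ i a := by
  rw [bpi, lift_single]

lemma bbar_single {n : ℕ} (σ ρ : SG n) (i : Fin n) (a : Itv σ ρ) (b : ℂ) :
    bbar σ ρ i (Finsupp.single a b) = b • bbarFun σ ρ i a := by
  rw [bbar, lift_single]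


/-- `γ ↦ (-1)^{ℓ(γσ⁻¹)} γ` is an isomorphism of `H_n(0)`-modules `θ[B(σ,ρ)] ≅ B̄(σ,ρ)`:
it is bijective and intertwines the `θ`-twisted action (where `π_i` acts via
`θ(π_i) = 1 - π_i`, i.e. `v ↦ v - 𝛑_i v`) with the action on `B̄(σ,ρ)` (where `π_i = 1 + π̄_i`
acts by `w ↦ w + π̄_i ⋆ w`). -/
theorem stmt17 (n : ℕ) (σ ρ : SG n) :
    Function.Bijective (thetaF σ ρ) ∧
    ∀ (i : Fin n) (v : Itv σ ρ →₀ ℂ),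
      thetaF σ ρ (v - bpi σ ρ i v) = thetaF σ ρ v + bbar σ ρ i (thetaF σ ρ v) := by

  have key : ∀ (a : Itv σ ρ),
      ((-1 : ℂ) ^ len (a.1 * σ⁻¹)) * ((-1 : ℂ) ^ len (a.1 * σ⁻¹)) = 1 := by
    intro a
    rw [← pow_add]
    exact Even.neg_one_pow ⟨len (a.1 * σ⁻¹), rfl⟩
  constructor
  · have hinv : ∀ v, thetaF σ ρ (thetaF σ ρ v) = v := by
      intro v
      induction v using Finsupp.induction_linear with
      | zero => simp
      | add f g hf hg => rw [map_add, map_add, hf, hg]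
      | single a b =>
        rw [thetaF_single, map_smul, thetaF_single, one_mul, smul_smul,
          mul_assoc, key, mul_one, Finsupp.smul_single, smul_eq_mul, mul_one]
    exact Function.bijective_iff_has_inverse.2 ⟨thetaF σ ρ, hinv, hinv⟩
  · intro i v
    induction v using Finsupp.induction_linear with
    | zero => simp
    | add f g hf hg =>
      rw [map_add (bpi σ ρ i), add_sub_add_comm, map_add, hf, hg, map_add (thetaF σ ρ),
        map_add (bbar σ ρ i)]
      abel
    | single a b =>
      by_cases hd : i ∈ DesL a.1
      · have hb : bpiFun σ ρ i a = Finsupp.single a 1 := by rw [bpiFun, if_pos hd]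
        have hbb : bbarFun σ ρ i a = -Finsupp.single a 1 := by rw [bbarFun, if_pos hd]
        rw [bpi_single, hb, Finsupp.smul_single, smul_eq_mul, mul_one, sub_self,
          map_zero, thetaF_single, map_smul, bbar_single, hbb, one_smul]
        rw [smul_neg, ← sub_eq_add_neg, sub_self]
      · by_cases hI : leL σ (sgen i * a.1) ∧ leL (sgen i * a.1) ρ
        · have hb : bpiFun σ ρ i a = Finsupp.single ⟨sgen i * a.1, hI⟩ 1 := by
            rw [bpiFun, if_neg hd, dif_pos hI]
          have hbb : bbarFun σ ρ i a = Finsupp.single ⟨sgen i * a.1, hI⟩ 1 := by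
            rw [bbarFun, if_neg hd, dif_pos hI]
          have hlen : (-1 : ℂ) ^ len ((sgen i * a.1) * σ⁻¹) =
              -(-1 : ℂ) ^ len (a.1 * σ⁻¹) := by
            rw [mul_assoc]; exact neg_one_pow_len_sgen_mul i (a.1 * σ⁻¹)
          have hlen' : (-1 : ℂ) ^ len ((⟨sgen i * a.1, hI⟩ : Itv σ ρ).1 * σ⁻¹) =
              -(-1 : ℂ) ^ len (a.1 * σ⁻¹) := hlen
          rw [bpi_single, hb, Finsupp.smul_single, smul_eq_mul, mul_one,
            map_sub, thetaF_single, thetaF_single, map_smul, bbar_single, hbb,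
            one_smul, hlen']
          rw [mul_neg, neg_smul, sub_neg_eq_add]
        · have hb : bpiFun σ ρ i a = 0 := by rw [bpiFun, if_neg hd, dif_neg hI]
          have hbb : bbarFun σ ρ i a = 0 := by rw [bbarFun, if_neg hd, dif_neg hI]
          rw [bpi_single, hb, smul_zero, sub_zero, thetaF_single, map_smul,
            bbar_single, hbb, one_smul, smul_zero, add_zero]


end
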